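/- Let E be a real normed vector space, Θ ⊆ E a nonempty closed convex set, and f₁, …, f_N : E → ℝ functions each of which is CSN with smoothness β > 0. Let θ₁, …, θ_N ∈ Θ, let ε̂ = (1/N) inf_{θ ∈ Θ} Σ_{n=1}^N f_n(θ), and let Ê ≥ ε̂. Let R > 0 and K > 0, and assume that for every η > 0, Regret(f_n) ≤ K(R²/η + (η/2) Σ_{n=1}^N ‖f_n′(θ_n)‖²). Then Regret(f_n) ≤ 8K²βR² + √(8K²βR²NÊ). -/

import Mathlib

/-- Self-bounding property for smooth nonnegative convex functions. -/
lemma csn_self_bound {E : Type*} [NormedAddCommGroup E] [NormedSpace ℝ E]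
    {f : E → ℝ} {β : ℝ} (hβ : 0 < β)
    (hnn : ∀ x, 0 ≤ f x) (hdiff : Differentiable ℝ f)
    (hlip : ∀ x y, ‖fderiv ℝ f x - fderiv ℝ f y‖ ≤ β * ‖x - y‖) (x : E) :
    ‖fderiv ℝ f x‖ ^ 2 ≤ 4 * β * f x := by
  set g := fderiv ℝ f x with hg
  have hfx : 0 ≤ 4 * β * f x := by nlinarith [hnn x]
  have key : ∀ y : E, 0 ≤ f x + g (y - x) + β * ‖y - x‖ ^ 2 := by
    intro y
    have hmv : ‖f y - f x - g (y - x)‖ ≤ (β * ‖y - x‖) * ‖y - x‖ := by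
      apply (convex_closedBall x ‖y - x‖).norm_image_sub_le_of_norm_fderiv_le'
        (fun z _ => hdiff z)
        (fun z hz => by
          refine (hlip z x).trans ?_
          have : ‖z - x‖ ≤ ‖y - x‖ := by
            simpa [dist_eq_norm] using Metric.mem_closedBall.mp hz
          nlinarith [norm_nonneg (z - x)])
      · exact Metric.mem_closedBall_self (norm_nonneg _)
      · simp [Metric.mem_closedBall, dist_eq_norm]
    have h1 : f y - f x - g (y - x) ≤ β * ‖y - x‖ * ‖y - x‖ :=
      le_trans (le_abs_self _) (by simpa [Real.norm_eq_abs] using hmv)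
    have h0 := hnn y
    nlinarith [sq_nonneg (‖y - x‖)]
  have hquad : ∀ v : E, (g v) ^ 2 ≤ 4 * (β * ‖v‖ ^ 2) * f x := by
    intro v
    have h := discrim_le_zero (a := β * ‖v‖ ^ 2) (b := -(g v)) (c := f x) ?_
    · rw [discrim] at h; nlinarith
    · intro t
      have := key (x - t • v)
      have hsub : (x - t • v) - x = -(t • v) := by abel
      rw [hsub] at this
      simp only [map_neg, map_smul, norm_neg, norm_smul, Real.norm_eq_abs, smul_eq_mul] at this
      rw [mul_pow, sq_abs] at this
      nlinarith [sq_nonneg t, sq_nonneg (‖v‖)]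
  have hbd : ‖g‖ ≤ Real.sqrt (4 * β * f x) := by
    apply ContinuousLinearMap.opNorm_le_bound _ (Real.sqrt_nonneg _)
    intro v
    have h := hquad v
    have : |g v| ≤ Real.sqrt (4 * β * f x) * ‖v‖ := by
      rw [← Real.sqrt_sq_eq_abs]
      calc Real.sqrt ((g v) ^ 2) ≤ Real.sqrt (4 * β * f x * ‖v‖ ^ 2) := by
            apply Real.sqrt_le_sqrt; nlinarith
        _ = Real.sqrt (4 * β * f x) * ‖v‖ := by
            rw [Real.sqrt_mul hfx, Real.sqrt_sq (norm_nonneg v)]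
    simpa [Real.norm_eq_abs] using this
  calc ‖g‖ ^ 2 ≤ Real.sqrt (4 * β * f x) ^ 2 :=
        pow_le_pow_left₀ (norm_nonneg _) hbd 2
    _ = 4 * β * f x := Real.sq_sqrt hfx




open Finset

/-- A differentiable function `f : E → ℝ` is CSN with smoothness `β` if it is convex,
non-negative, and its Fréchet derivative is `β`-Lipschitz in the operator (dual) norm. -/
def IsCSN {E : Type*} [NormedAddCommGroup E] [NormedSpace ℝ E]
    (f : E → ℝ) (β : ℝ) : Prop :=
  ConvexOn ℝ Set.univ f ∧ (∀ x, 0 ≤ f x) ∧ Differentiable ℝ f ∧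
    ∀ x y, ‖fderiv ℝ f x - fderiv ℝ f y‖ ≤ β * ‖x - y‖

/-- `Regret(f_n) = Σ_{n=1}^N f_n(θ_n) − inf_{θ ∈ Θ} Σ_{n=1}^N f_n(θ)`. -/
noncomputable def regret {E : Type*} (Θ : Set E) (N : ℕ)
    (f : ℕ → E → ℝ) (θ : ℕ → E) : ℝ :=
  (∑ n ∈ Finset.Icc 1 N, f n (θ n))
    - sInf ((fun x => ∑ n ∈ Finset.Icc 1 N, f n x) '' Θ)

/-- Lemma E.2: bias-dependent regret bound for admissible online algorithms with proper
adaptive stepsizes, encoded as the regret bound holding for every `η > 0` up to a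
multiplicative factor `K`. -/
theorem bias_dependent_regret_adaptive
    {E : Type*} [NormedAddCommGroup E] [NormedSpace ℝ E]
    (Θ : Set E) (hne : Θ.Nonempty) (hcl : IsClosed Θ) (hcv : Convex ℝ Θ)
    (N : ℕ) (hN : 1 ≤ N)
    (f : ℕ → E → ℝ) (β : ℝ) (hβ : 0 < β)
    (hCSN : ∀ n ∈ Finset.Icc 1 N, IsCSN (f n) β)
    (θ : ℕ → E) (hθ : ∀ n ∈ Finset.Icc 1 N, θ n ∈ Θ)
    (εhat Ehat R K : ℝ)
    (hεhat : εhat = (1 / (N : ℝ)) * sInf ((fun x => ∑ n ∈ Finset.Icc 1 N, f n x) '' Θ))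
    (hEhat : εhat ≤ Ehat)
    (hR : 0 < R) (hK : 0 < K)
    (hreg : ∀ η : ℝ, 0 < η → regret Θ N f θ
        ≤ K * (R ^ 2 / η + (η / 2) * ∑ n ∈ Finset.Icc 1 N, ‖fderiv ℝ (f n) (θ n)‖ ^ 2)) :
    regret Θ N f θ ≤ 8 * K ^ 2 * β * R ^ 2
      + Real.sqrt (8 * K ^ 2 * β * R ^ 2 * N * Ehat) := by

  classical
  set S := regret Θ N f θ with hS
  set I := sInf ((fun x => ∑ n ∈ Finset.Icc 1 N, f n x) '' Θ) with hI
  have hNpos : (0:ℝ) < N := by exact_mod_cast hN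
  have hI0 : 0 ≤ I := by
    apply Real.sInf_nonneg
    rintro y ⟨x, -, rfl⟩
    exact Finset.sum_nonneg fun n hn => (hCSN n hn).2.1 x
  have hINε : I = N * εhat := by
    rw [hεhat]; field_simp
  have hε0 : 0 ≤ εhat := by
    have : εhat = I / N := by rw [hINε]; field_simp
    rw [this]; positivity
  have hD0 : 0 ≤ (N:ℝ) * Ehat := mul_nonneg hNpos.le (hε0.trans hEhat)
  have hsumθ : (∑ n ∈ Finset.Icc 1 N, f n (θ n)) = S + I := by
    rw [hS, regret, hI]; ring
  have hC0 : (0:ℝ) ≤ 8 * K ^ 2 * β * R ^ 2 := by positivity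
  have harg0 : (0:ℝ) ≤ 8 * K ^ 2 * β * R ^ 2 * N * Ehat := by
    calc (0:ℝ) ≤ 8 * K ^ 2 * β * R ^ 2 * ((N:ℝ) * Ehat) := mul_nonneg hC0 hD0
      _ = 8 * K ^ 2 * β * R ^ 2 * N * Ehat := by ring
  have ht0 := Real.sqrt_nonneg (8 * K ^ 2 * β * R ^ 2 * N * Ehat)
  rcases le_or_gt S 0 with hSle | hSpos
  · linarith
  -- main case: S > 0
  have hP : 0 < S + (N:ℝ) * Ehat := by linarith
  have hgsum : (∑ n ∈ Finset.Icc 1 N, ‖fderiv ℝ (f n) (θ n)‖ ^ 2)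
      ≤ 4 * β * (S + (N:ℝ) * Ehat) := by
    have h1 : (∑ n ∈ Finset.Icc 1 N, ‖fderiv ℝ (f n) (θ n)‖ ^ 2)
        ≤ ∑ n ∈ Finset.Icc 1 N, 4 * β * f n (θ n) := by
      apply Finset.sum_le_sum
      intro n hn
      obtain ⟨-, hnn, hdiff, hlip⟩ := hCSN n hn
      exact csn_self_bound hβ hnn hdiff hlip (θ n)
    have h2 : (∑ n ∈ Finset.Icc 1 N, 4 * β * f n (θ n))
        = 4 * β * (S + I) := by rw [← hsumθ, Finset.mul_sum]
    have h3 : I ≤ (N:ℝ) * Ehat := by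
      rw [hINε]; exact mul_le_mul_of_nonneg_left hEhat hNpos.le
    nlinarith
  set s := Real.sqrt (2 * β * (S + (N:ℝ) * Ehat)) with hs
  have hs2 : s ^ 2 = 2 * β * (S + (N:ℝ) * Ehat) := Real.sq_sqrt (by positivity)
  have hspos : 0 < s := Real.sqrt_pos.mpr (by positivity)
  have hη : 0 < R / s := div_pos hR hspos
  have hbound := hreg (R / s) hη
  have hSle2 : S ≤ 2 * K * R * s := by
    have e1 : R ^ 2 / (R / s) = R * s := by field_simp
    have e2 : (R / s / 2) * (4 * β * (S + (N:ℝ) * Ehat)) = R * s := by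
      rw [div_div]
      rw [div_mul_eq_mul_div, div_eq_iff (by positivity : (s * 2 : ℝ) ≠ 0)]
      linear_combination (-2 * R) * hs2
    have e3 : K * (R ^ 2 / (R / s) + (R / s / 2) * ∑ n ∈ Finset.Icc 1 N, ‖fderiv ℝ (f n) (θ n)‖ ^ 2)
        ≤ K * (R * s + R * s) := by
      apply mul_le_mul_of_nonneg_left _ hK.le
      rw [e1]
      have : (R / s / 2) * (∑ n ∈ Finset.Icc 1 N, ‖fderiv ℝ (f n) (θ n)‖ ^ 2)
          ≤ (R / s / 2) * (4 * β * (S + (N:ℝ) * Ehat)) :=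
        mul_le_mul_of_nonneg_left hgsum (by positivity)
      rw [e2] at this
      linarith
    calc S ≤ _ := hbound
      _ ≤ K * (R * s + R * s) := e3
      _ = 2 * K * R * s := by ring
  have hSsq : S ^ 2 ≤ 8 * K ^ 2 * β * R ^ 2 * (S + (N:ℝ) * Ehat) := by
    have : S ^ 2 ≤ (2 * K * R * s) ^ 2 := by
      apply pow_le_pow_left₀ hSpos.le hSle2
    calc S ^ 2 ≤ (2 * K * R * s) ^ 2 := this
      _ = 4 * K ^ 2 * R ^ 2 * s ^ 2 := by ring
      _ = 8 * K ^ 2 * β * R ^ 2 * (S + (N:ℝ) * Ehat) := by rw [hs2]; ring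
  set t := Real.sqrt (8 * K ^ 2 * β * R ^ 2 * N * Ehat) with htdef
  have ht2 : t ^ 2 = 8 * K ^ 2 * β * R ^ 2 * N * Ehat := Real.sq_sqrt harg0
  nlinarith [hSsq, ht2, ht0, hC0, hSpos, mul_nonneg hC0 ht0, sq_nonneg (S - t)]
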